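/- Let N, D > 1 be coprime integers, τ ∈ ℍ, Γ = Z+Zτ, and let a, b be residues mod N with (a,b) ≠ (0,0); set s = (a/N)τ + b/N. Then Σ_{(c,d) ∈ (Z/DZ)², (c,d)≠(0,0)} ẽ_{k,r+1}(Ds, (Nc/D)τ + Nd/D; Γ) = D^{k−r+1}·ẽ_{k,r+1}(s, 0; Γ) − ẽ_{k,r+1}(Ds, 0; Γ) for all integers k, r ≥ 0 with r > k+1 (so all series converge absolutely). -/

import Mathlib

open Complex


lemma EKaux.lat_zero {τ : ℂ} (hτ : 0 < τ.im) {m n : ℝ} (h : (m:ℂ)*τ + n = 0) :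
    m = 0 ∧ n = 0 := by
  have him := congrArg Complex.im h
  simp [Complex.add_im, Complex.mul_im] at him
  have hm : m = 0 := by
    rcases him with h1 | h2
    · exact h1
    · exact absurd h2 hτ.ne'
  refine ⟨hm, ?_⟩
  have hre := congrArg Complex.re h
  simp [hm] at hre
  exact hre

-- geometric character sum
lemma EKaux.geom_char (D : ℕ) (hD : 0 < D) (M : ℤ) :
    ∑ j ∈ Finset.range D, Complex.exp (2 * Real.pi * I * M * j / D)
      = if (D:ℤ) ∣ M then (D:ℂ) else 0 := by
  have hD0 : (D:ℂ) ≠ 0 := Nat.cast_ne_zero.mpr hD.ne'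
  set ζ : ℂ := Complex.exp (2 * Real.pi * I * M / D) with hζ
  have hterm : ∀ j : ℕ, Complex.exp (2 * Real.pi * I * M * j / D) = ζ ^ j := by
    intro j
    rw [hζ, ← Complex.exp_nat_mul]
    ring_nf
  rw [Finset.sum_congr rfl fun j _ => hterm j]
  by_cases hdvd : (D:ℤ) ∣ M
  · obtain ⟨c, hc⟩ := hdvd
    have hζ1 : ζ = 1 := by
      rw [hζ, Complex.exp_eq_one_iff]
      exact ⟨c, by field_simp [hc]; exact_mod_cast hc⟩
    rw [if_pos ⟨c, hc⟩]
    simp [hζ1]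
  · have hζne : ζ ≠ 1 := by
      intro h1
      rw [hζ, Complex.exp_eq_one_iff] at h1
      obtain ⟨n, hn⟩ := h1
      have h2 : (2:ℂ) * Real.pi * I ≠ 0 := by
        simp [Real.pi_ne_zero, Complex.I_ne_zero]
      have : (M:ℂ) = n * D := by
        field_simp at hn
        have := hn
        -- 2πI*M = n*(2πI)*D
        apply mul_left_cancel₀ h2
        ring_nf
        ring_nf at this
        linear_combination (2 * (Real.pi:ℂ) * I) * this
      have : M = n * D := by exact_mod_cast this
      exact hdvd ⟨n, by linarith⟩
    have hζD : ζ ^ D = 1 := by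
      rw [hζ, ← Complex.exp_nat_mul, Complex.exp_eq_one_iff]
      exact ⟨M, by field_simp⟩
    rw [geom_sum_eq hζne, hζD, if_neg hdvd]
    simp

lemma EKaux.char_sum (N D : ℕ) (hD : 0 < D) (hco : Nat.Coprime N D) (m n : ℤ) :
    ∑ cd ∈ Finset.range D ×ˢ Finset.range D,
      Complex.exp (2 * Real.pi * I * ((N:ℂ) * ((m:ℂ) * (cd.2:ℂ) - (n:ℂ) * (cd.1:ℂ))) / D)
      = if (D:ℤ) ∣ m ∧ (D:ℤ) ∣ n then ((D:ℂ))^2 else 0 := by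
  have hsplit : ∀ cd : ℕ × ℕ,
      Complex.exp (2 * Real.pi * I * ((N:ℂ) * ((m:ℂ) * (cd.2:ℂ) - (n:ℂ) * (cd.1:ℂ))) / D)
        = Complex.exp (2 * Real.pi * I * (((-(N * n) : ℤ)):ℂ) * (cd.1:ℂ) / D) *
          Complex.exp (2 * Real.pi * I * (((N * m : ℤ)):ℂ) * (cd.2:ℂ) / D) := by
    intro cd
    rw [← Complex.exp_add]
    congr 1
    push_cast
    ring
  rw [Finset.sum_congr rfl fun cd _ => hsplit cd, Finset.sum_product]
  simp only []
  rw [← Finset.sum_mul_sum]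
  rw [EKaux.geom_char D hD (-(N*n)), EKaux.geom_char D hD (N*m)]
  have hdvd1 : ((D:ℤ) ∣ -(↑N * n)) ↔ (D:ℤ) ∣ n := by
    rw [dvd_neg]
    constructor
    · intro h
      exact (Nat.isCoprime_iff_coprime.mpr (hco.symm)).dvd_of_dvd_mul_left h
    · intro h; exact h.mul_left _
  have hdvd2 : ((D:ℤ) ∣ (↑N * m)) ↔ (D:ℤ) ∣ m := by
    constructor
    · intro h
      exact (Nat.isCoprime_iff_coprime.mpr (hco.symm)).dvd_of_dvd_mul_left h
    · intro h; exact h.mul_left _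
  simp only [hdvd1, hdvd2]
  by_cases h1 : (D:ℤ) ∣ m <;> by_cases h2 : (D:ℤ) ∣ n <;> simp [h1, h2] <;> ring

lemma EKaux.exp_pair (τ : ℂ) (hτ : 0 < τ.im) (N D : ℕ) (hD : 0 < D) (m n : ℤ) (c d : ℕ) :
    (((m:ℂ) * τ + (n:ℂ)) * (starRingEnd ℂ) (((N:ℂ) * (c:ℂ) / D) * τ + (N:ℂ) * (d:ℂ) / D) -
        (((N:ℂ) * (c:ℂ) / D) * τ + (N:ℂ) * (d:ℂ) / D) * (starRingEnd ℂ) ((m:ℂ) * τ + (n:ℂ))) /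
      (((τ.im / Real.pi : ℝ)) : ℂ)
      = 2 * Real.pi * I * ((N:ℂ) * ((m:ℂ) * (d:ℂ) - (n:ℂ) * (c:ℂ))) / D := by
  have hconjτ : (starRingEnd ℂ) τ = τ - (2 * τ.im : ℝ) * I := by
    rw [← Complex.sub_conj]; ring
  have hIm : (τ.im : ℂ) ≠ 0 := by exact_mod_cast hτ.ne'
  have hπ : (Real.pi : ℂ) ≠ 0 := by exact_mod_cast Real.pi_ne_zero
  have hD0 : (D : ℂ) ≠ 0 := Nat.cast_ne_zero.mpr hD.ne'
  simp only [map_add, map_mul, map_div₀, Complex.conj_natCast, map_intCast, hconjτ]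
  push_cast
  field_simp
  ring

lemma EKaux.summable_base (τ : ℂ) (hτ : 0 < τ.im) {K : ℝ} (hK : 2 < K) :
    Summable fun p : ℤ × ℤ => ‖(p.1:ℂ) * τ + (p.2:ℂ)‖ ^ (-K) := by
  have hK0 : (0:ℝ) ≤ K := by linarith
  have hs : Summable fun x : Fin 2 → ℤ => ‖(x 0 : ℂ) * τ + (x 1 : ℂ)‖ ^ (-K) := by
    refine Summable.of_nonneg_of_le (fun x => Real.rpow_nonneg (norm_nonneg _) _)
      (fun x => ?_) ((EisensteinSeries.summable_one_div_norm_rpow hK).mul_left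
        (EisensteinSeries.r ⟨τ, hτ⟩ ^ (-K)))
    exact EisensteinSeries.summand_bound ⟨τ, hτ⟩ hK0 x
  have := ((finTwoArrowEquiv ℤ).symm.summable_iff
    (f := fun x : Fin 2 → ℤ => ‖(x 0 : ℂ) * τ + (x 1 : ℂ)‖ ^ (-K))).mpr hs
  refine this.congr fun p => ?_
  simp [finTwoArrowEquiv, Function.comp]

lemma EKaux.summable_shift (τ : ℂ) (hτ : 0 < τ.im) (e f : ℤ) (M : ℕ) (hM : 0 < M)
    {K : ℝ} (hK : 2 < K) :
    Summable fun p : ℤ × ℤ =>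
      ‖((e:ℂ)/M) * τ + (f:ℂ)/M + ((p.1:ℂ) * τ + (p.2:ℂ))‖ ^ (-K) := by
  have hM0 : (M : ℂ) ≠ 0 := Nat.cast_ne_zero.mpr hM.ne'
  have hMR : (0:ℝ) < (M:ℝ) := Nat.cast_pos.mpr hM
  have hinj : Function.Injective (fun p : ℤ × ℤ => ((e + M * p.1, f + M * p.2) : ℤ × ℤ)) := by
    intro p q h
    simp only [Prod.mk.injEq] at h
    have hMZ : (M:ℤ) ≠ 0 := by exact_mod_cast hM.ne'
    have h1 : p.1 = q.1 := by
      have := h.1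
      exact mul_left_cancel₀ hMZ (by linarith)
    have h2 : p.2 = q.2 := by
      have := h.2
      exact mul_left_cancel₀ hMZ (by linarith)
    exact Prod.ext h1 h2
  have hsum := ((EKaux.summable_base τ hτ hK).comp_injective hinj).mul_left ((M:ℝ) ^ K)
  refine hsum.congr fun p => ?_
  simp only [Function.comp]
  have harg : ((e:ℂ)/M) * τ + (f:ℂ)/M + ((p.1:ℂ) * τ + (p.2:ℂ))
      = (((e + M * p.1 : ℤ):ℂ) * τ + ((f + M * p.2 : ℤ):ℂ)) / M := by
    push_cast
    field_simp
    ring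
  rw [harg, norm_div, Complex.norm_natCast,
    Real.div_rpow (norm_nonneg _) (Nat.cast_nonneg M),
    Real.rpow_neg (Nat.cast_nonneg M)]
  field_simp

lemma EKaux.norm_term (k r : ℕ) {x u : ℂ} (hx : x ≠ 0) (hu : u.re = 0) :
    ‖(starRingEnd ℂ) x ^ k / x ^ (r+1) * Complex.exp u‖
      = ‖x‖ ^ (-((r:ℝ) + 1 - k)) := by
  have hx0 : 0 < ‖x‖ := norm_pos_iff.mpr hx
  rw [norm_mul, norm_div, norm_pow, norm_pow, Complex.norm_conj, Complex.norm_exp, hu,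
    Real.exp_zero, mul_one, ← Real.rpow_natCast ‖x‖ k,
    ← Real.rpow_natCast ‖x‖ (r+1), ← Real.rpow_sub hx0]
  congr 1
  push_cast
  ring

lemma EKaux.re_zero (w t : ℂ) (x : ℝ) :
    ((w * (starRingEnd ℂ) t - t * (starRingEnd ℂ) w) / (x:ℂ)).re = 0 := by
  have h : t * (starRingEnd ℂ) w = (starRingEnd ℂ) (w * (starRingEnd ℂ) t) := by
    rw [map_mul, Complex.conj_conj]; ring
  rw [h, Complex.div_ofReal_re, Complex.sub_re, Complex.conj_re, sub_self, zero_div]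

lemma EKaux.nonvanish (τ : ℂ) (hτ : 0 < τ.im) (N : ℕ) (hN : 0 < N) (a b c : ℤ)
    (hab : ¬ ((N:ℤ) ∣ a ∧ (N:ℤ) ∣ b)) (hc : IsCoprime (N:ℤ) c) (p : ℤ × ℤ) :
    (c:ℂ) * (((a:ℂ)/N) * τ + (b:ℂ)/N) + ((p.1:ℂ) * τ + (p.2:ℂ)) ≠ 0 := by
  intro h
  have hN0 : (N:ℂ) ≠ 0 := Nat.cast_ne_zero.mpr hN.ne'
  have key : (((c*a + N*p.1 : ℤ):ℝ):ℂ) * τ + (((c*b + N*p.2 : ℤ):ℝ):ℂ) = 0 := by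
    push_cast
    field_simp at h
    linear_combination h
  obtain ⟨h1, h2⟩ := EKaux.lat_zero hτ key
  have h1' : c*a + (N:ℤ)*p.1 = 0 := by exact_mod_cast h1
  have h2' : c*b + (N:ℤ)*p.2 = 0 := by exact_mod_cast h2
  apply hab
  constructor
  · have hd : (N:ℤ) ∣ c * a := ⟨-p.1, by linarith⟩
    exact hc.dvd_of_dvd_mul_left hd
  · have hd : (N:ℤ) ∣ c * b := ⟨-p.2, by linarith⟩
    exact hc.dvd_of_dvd_mul_left hd



/-- The normalized Eisenstein–Kronecker series
`ẽ_{k,r+1}(s,t;ℤ+ℤτ) = ((−1)^{k+r} r!/A^k)·Σ_{γ∈Γ, γ≠−s} (conj s+conj γ)^k/(s+γ)^{r+1}·⟨γ,t⟩`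
with `A = Im τ/π`, in its region of absolute convergence. -/
noncomputable def eisKron (τ : ℂ) (k r : ℕ) (s t : ℂ) : ℂ :=
  ((-1 : ℂ) ^ (k + r) * (Nat.factorial r : ℂ) / (((τ.im / Real.pi : ℝ)) : ℂ) ^ k) *
    ∑' p : ℤ × ℤ,
      (if s + ((p.1 : ℂ) * τ + (p.2 : ℂ)) = 0 then (0 : ℂ)
       else ((starRingEnd ℂ) s + (starRingEnd ℂ) ((p.1 : ℂ) * τ + (p.2 : ℂ))) ^ k /
            (s + ((p.1 : ℂ) * τ + (p.2 : ℂ))) ^ (r + 1) *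
            Complex.exp ((((p.1 : ℂ) * τ + (p.2 : ℂ)) * (starRingEnd ℂ) t -
                t * (starRingEnd ℂ) ((p.1 : ℂ) * τ + (p.2 : ℂ))) /
              (((τ.im / Real.pi : ℝ)) : ℂ)))

/-- for coprime `N, D > 1`, `s = (a/N)τ + b/N` a torsion point of exact
level dividing `N` (i.e. `(a,b) ≢ (0,0) mod N`) and `k, r ≥ 0` with `r > k+1`:
`Σ_{(c,d)≠(0,0) in (ℤ/D)²} ẽ_{k,r+1}(Ds, (Nc/D)τ + Nd/D)
   = D^{k−r+1}·ẽ_{k,r+1}(s,0) − ẽ_{k,r+1}(Ds,0)`. -/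
lemma EKaux.eisKron_eq (τ : ℂ) (k r : ℕ) (S t : ℂ)
    (h : ∀ p : ℤ × ℤ, S + ((p.1:ℂ) * τ + (p.2:ℂ)) ≠ 0) :
    eisKron τ k r S t
      = ((-1 : ℂ) ^ (k + r) * (Nat.factorial r : ℂ) / (((τ.im / Real.pi : ℝ)) : ℂ) ^ k) *
        ∑' p : ℤ × ℤ,
          (starRingEnd ℂ) (S + ((p.1:ℂ) * τ + (p.2:ℂ))) ^ k /
            (S + ((p.1:ℂ) * τ + (p.2:ℂ))) ^ (r + 1) *
            Complex.exp ((((p.1 : ℂ) * τ + (p.2 : ℂ)) * (starRingEnd ℂ) t -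
                t * (starRingEnd ℂ) ((p.1 : ℂ) * τ + (p.2 : ℂ))) /
              (((τ.im / Real.pi : ℝ)) : ℂ)) := by
  unfold eisKron
  congr 1
  refine tsum_congr fun p => ?_
  rw [if_neg (h p)]
  simp only [map_add]

lemma EKaux.eisKron_zero_eq (τ : ℂ) (k r : ℕ) (S : ℂ)
    (h : ∀ p : ℤ × ℤ, S + ((p.1:ℂ) * τ + (p.2:ℂ)) ≠ 0) :
    eisKron τ k r S 0
      = ((-1 : ℂ) ^ (k + r) * (Nat.factorial r : ℂ) / (((τ.im / Real.pi : ℝ)) : ℂ) ^ k) *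
        ∑' p : ℤ × ℤ,
          (starRingEnd ℂ) (S + ((p.1:ℂ) * τ + (p.2:ℂ))) ^ k /
            (S + ((p.1:ℂ) * τ + (p.2:ℂ))) ^ (r + 1) := by
  rw [EKaux.eisKron_eq τ k r S 0 h]
  congr 1
  refine tsum_congr fun p => ?_
  simp

lemma EKaux.summable_main (τ : ℂ) (k r : ℕ) (S : ℂ)
    (h : ∀ p : ℤ × ℤ, S + ((p.1:ℂ) * τ + (p.2:ℂ)) ≠ 0) (u : ℤ × ℤ → ℂ)
    (hu : ∀ p, (u p).re = 0)
    (hs : Summable fun p : ℤ × ℤ =>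
      ‖S + ((p.1:ℂ) * τ + (p.2:ℂ))‖ ^ (-((r:ℝ) + 1 - k))) :
    Summable fun p : ℤ × ℤ =>
      (starRingEnd ℂ) (S + ((p.1:ℂ) * τ + (p.2:ℂ))) ^ k /
        (S + ((p.1:ℂ) * τ + (p.2:ℂ))) ^ (r + 1) * Complex.exp (u p) := by
  apply Summable.of_norm
  refine hs.congr fun p => ?_
  rw [EKaux.norm_term k r (h p) (hu p)]

theorem eisKron_distribution
    (τ : ℂ) (hτ : 0 < τ.im) (N D : ℕ) (hN : 1 < N) (hD : 1 < D)
    (hco : Nat.Coprime N D) (a b : ℤ) (hab : ¬ ((N : ℤ) ∣ a ∧ (N : ℤ) ∣ b))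
    (k r : ℕ) (hkr : k + 1 < r) :
    ∑ cd ∈ (Finset.range D ×ˢ Finset.range D).erase (0, 0),
        eisKron τ k r ((D : ℂ) * (((a : ℂ) / N) * τ + (b : ℂ) / N))
          (((N : ℂ) * (cd.1 : ℂ) / D) * τ + (N : ℂ) * (cd.2 : ℂ) / D)
      = (D : ℂ) ^ ((k : ℤ) - (r : ℤ) + 1) *
          eisKron τ k r (((a : ℂ) / N) * τ + (b : ℂ) / N) 0
        - eisKron τ k r ((D : ℂ) * (((a : ℂ) / N) * τ + (b : ℂ) / N)) 0 := by
  classical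
  have hDpos : 0 < D := by omega
  have hNpos : 0 < N := by omega
  have hD0 : (D:ℂ) ≠ 0 := Nat.cast_ne_zero.mpr hDpos.ne'
  have hDZ : ((D:ℤ)) ≠ 0 := by exact_mod_cast hDpos.ne'
  have hK : (2:ℝ) < (r:ℝ) + 1 - k := by
    have : (k:ℝ) + 1 < (r:ℝ) := by exact_mod_cast hkr
    linarith
  set s₀ : ℂ := ((a:ℂ)/N) * τ + (b:ℂ)/N with hs₀
  set S : ℂ := (D:ℂ) * s₀ with hS
  set C : ℂ := ((-1 : ℂ) ^ (k + r) * (Nat.factorial r : ℂ) /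
    (((τ.im / Real.pi : ℝ)) : ℂ) ^ k) with hCdef
  have hcopD : IsCoprime (N:ℤ) (D:ℤ) := Nat.isCoprime_iff_coprime.mpr hco
  have hnvD : ∀ p : ℤ × ℤ, S + ((p.1:ℂ) * τ + (p.2:ℂ)) ≠ 0 := by
    intro p
    have h := EKaux.nonvanish τ hτ N hNpos a b (D:ℤ) hab hcopD p
    rw [hS, hs₀]
    simpa using h
  have hnv1 : ∀ p : ℤ × ℤ, s₀ + ((p.1:ℂ) * τ + (p.2:ℂ)) ≠ 0 := by
    intro p
    have h := EKaux.nonvanish τ hτ N hNpos a b 1 hab isCoprime_one_right p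
    rw [hs₀]
    simpa using h
  have hsS : Summable fun p : ℤ × ℤ =>
      ‖S + ((p.1:ℂ) * τ + (p.2:ℂ))‖ ^ (-((r:ℝ) + 1 - k)) := by
    refine (EKaux.summable_shift τ hτ (D*a) (D*b) N hNpos hK).congr fun p => ?_
    have harg : (((D*a : ℤ):ℂ)/N) * τ + ((D*b : ℤ):ℂ)/N + ((p.1:ℂ) * τ + (p.2:ℂ))
        = S + ((p.1:ℂ) * τ + (p.2:ℂ)) := by
      rw [hS, hs₀]; push_cast; ring
    rw [harg]
  have hEre : ∀ (c d : ℕ) (p : ℤ × ℤ),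
      ((2 * (Real.pi:ℂ) * I * ((N:ℂ) * ((p.1:ℂ) * (d:ℂ) - (p.2:ℂ) * (c:ℂ))) / D)).re = 0 := by
    intro c d p
    have h : (2 * (Real.pi:ℂ) * I * ((N:ℂ) * ((p.1:ℂ) * (d:ℂ) - (p.2:ℂ) * (c:ℂ))) / D)
        = ((2 * Real.pi * ((N:ℝ) * ((p.1:ℝ) * (d:ℝ) - (p.2:ℝ) * (c:ℝ))) / D : ℝ) : ℂ) * I := by
      push_cast; ring
    rw [h]
    simp
  have hsummand : ∀ cd : ℕ × ℕ,
      Summable fun p : ℤ × ℤ =>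
        (starRingEnd ℂ) (S + ((p.1:ℂ) * τ + (p.2:ℂ))) ^ k /
          (S + ((p.1:ℂ) * τ + (p.2:ℂ))) ^ (r + 1) *
          Complex.exp (2 * Real.pi * I *
            ((N:ℂ) * ((p.1:ℂ) * (cd.2:ℂ) - (p.2:ℂ) * (cd.1:ℂ))) / D) :=
    fun cd => EKaux.summable_main τ k r S hnvD
      (fun p => 2 * Real.pi * I * ((N:ℂ) * ((p.1:ℂ) * (cd.2:ℂ) - (p.2:ℂ) * (cd.1:ℂ))) / D)
      (fun p => hEre cd.1 cd.2 p) hsS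
  have step1 : ∀ cd : ℕ × ℕ,
      eisKron τ k r S (((N:ℂ) * (cd.1:ℂ) / D) * τ + (N:ℂ) * (cd.2:ℂ) / D)
        = C * ∑' p : ℤ × ℤ,
            (starRingEnd ℂ) (S + ((p.1:ℂ) * τ + (p.2:ℂ))) ^ k /
              (S + ((p.1:ℂ) * τ + (p.2:ℂ))) ^ (r + 1) *
              Complex.exp (2 * Real.pi * I *
                ((N:ℂ) * ((p.1:ℂ) * (cd.2:ℂ) - (p.2:ℂ) * (cd.1:ℂ))) / D) := by
    intro cd
    rw [EKaux.eisKron_eq τ k r S _ hnvD, ← hCdef]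
    congr 1
    refine tsum_congr fun p => ?_
    rw [EKaux.exp_pair τ hτ N D hDpos p.1 p.2 cd.1 cd.2]
  have hinj : Function.Injective
      (fun q : ℤ × ℤ => (((D:ℤ) * q.1, (D:ℤ) * q.2) : ℤ × ℤ)) := by
    intro p q h
    simp only [Prod.mk.injEq] at h
    exact Prod.ext (mul_left_cancel₀ hDZ h.1) (mul_left_cancel₀ hDZ h.2)
  have hsupp : Function.support (fun p : ℤ × ℤ =>
      (if (D:ℤ) ∣ p.1 ∧ (D:ℤ) ∣ p.2 then (D:ℂ)^2 *
        ((starRingEnd ℂ) (S + ((p.1:ℂ) * τ + (p.2:ℂ))) ^ k /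
          (S + ((p.1:ℂ) * τ + (p.2:ℂ))) ^ (r + 1)) else 0)) ⊆
      Set.range (fun q : ℤ × ℤ => (((D:ℤ) * q.1, (D:ℤ) * q.2) : ℤ × ℤ)) := by
    intro p hp
    rcases Classical.em ((D:ℤ) ∣ p.1 ∧ (D:ℤ) ∣ p.2) with hcase | hcase
    · obtain ⟨⟨c1, hc1⟩, ⟨c2, hc2⟩⟩ := hcase
      exact ⟨(c1, c2), by simp [hc1.symm, hc2.symm]⟩
    · exact absurd (if_neg hcase) hp
  have hzpow : (D:ℂ) ^ ((k:ℤ) - (r:ℤ) + 1)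
      = (D:ℂ)^2 * ((D:ℂ)^k / (D:ℂ)^(r+1)) := by
    rw [show (k:ℤ) - (r:ℤ) + 1 = ((k+2 : ℕ) : ℤ) - ((r+1 : ℕ) : ℤ) by push_cast; ring,
      zpow_sub₀ hD0, zpow_natCast, zpow_natCast, pow_add]
    field_simp
  have key : (∑ cd ∈ Finset.range D ×ˢ Finset.range D,
        eisKron τ k r S (((N:ℂ) * (cd.1:ℂ) / D) * τ + (N:ℂ) * (cd.2:ℂ) / D))
      = (D:ℂ) ^ ((k:ℤ) - (r:ℤ) + 1) * eisKron τ k r s₀ 0 := by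
    calc (∑ cd ∈ Finset.range D ×ˢ Finset.range D,
        eisKron τ k r S (((N:ℂ) * (cd.1:ℂ) / D) * τ + (N:ℂ) * (cd.2:ℂ) / D))
        = ∑ cd ∈ Finset.range D ×ˢ Finset.range D, C * ∑' p : ℤ × ℤ,
            (starRingEnd ℂ) (S + ((p.1:ℂ) * τ + (p.2:ℂ))) ^ k /
              (S + ((p.1:ℂ) * τ + (p.2:ℂ))) ^ (r + 1) *
              Complex.exp (2 * Real.pi * I *
                ((N:ℂ) * ((p.1:ℂ) * (cd.2:ℂ) - (p.2:ℂ) * (cd.1:ℂ))) / D) :=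
          Finset.sum_congr rfl fun cd _ => step1 cd
      _ = C * ∑ cd ∈ Finset.range D ×ˢ Finset.range D, ∑' p : ℤ × ℤ,
            (starRingEnd ℂ) (S + ((p.1:ℂ) * τ + (p.2:ℂ))) ^ k /
              (S + ((p.1:ℂ) * τ + (p.2:ℂ))) ^ (r + 1) *
              Complex.exp (2 * Real.pi * I *
                ((N:ℂ) * ((p.1:ℂ) * (cd.2:ℂ) - (p.2:ℂ) * (cd.1:ℂ))) / D) :=
          (Finset.mul_sum _ _ _).symm
      _ = C * ∑' p : ℤ × ℤ, ∑ cd ∈ Finset.range D ×ˢ Finset.range D,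
            (starRingEnd ℂ) (S + ((p.1:ℂ) * τ + (p.2:ℂ))) ^ k /
              (S + ((p.1:ℂ) * τ + (p.2:ℂ))) ^ (r + 1) *
              Complex.exp (2 * Real.pi * I *
                ((N:ℂ) * ((p.1:ℂ) * (cd.2:ℂ) - (p.2:ℂ) * (cd.1:ℂ))) / D) := by
          rw [← Summable.tsum_finsetSum (fun cd _ => hsummand cd)]
      _ = C * ∑' p : ℤ × ℤ,
            (if (D:ℤ) ∣ p.1 ∧ (D:ℤ) ∣ p.2 then (D:ℂ)^2 *
              ((starRingEnd ℂ) (S + ((p.1:ℂ) * τ + (p.2:ℂ))) ^ k /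
                (S + ((p.1:ℂ) * τ + (p.2:ℂ))) ^ (r + 1)) else 0) := by
          congr 1
          refine tsum_congr fun p => ?_
          rw [← Finset.mul_sum, EKaux.char_sum N D hDpos hco p.1 p.2]
          split_ifs with hcase
          · ring
          · rw [mul_zero]
      _ = C * ∑' q : ℤ × ℤ,
            (if (D:ℤ) ∣ (D:ℤ) * q.1 ∧ (D:ℤ) ∣ (D:ℤ) * q.2 then (D:ℂ)^2 *
              ((starRingEnd ℂ) (S + (((((D:ℤ) * q.1 : ℤ)):ℂ) * τ + ((((D:ℤ) * q.2 : ℤ)):ℂ))) ^ k /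
                (S + (((((D:ℤ) * q.1 : ℤ)):ℂ) * τ + ((((D:ℤ) * q.2 : ℤ)):ℂ))) ^ (r + 1)) else 0) := by
          rw [hinj.tsum_eq hsupp]
      _ = C * ∑' q : ℤ × ℤ, ((D:ℂ)^2 * ((D:ℂ)^k / (D:ℂ)^(r+1))) *
            ((starRingEnd ℂ) (s₀ + ((q.1:ℂ) * τ + (q.2:ℂ))) ^ k /
              (s₀ + ((q.1:ℂ) * τ + (q.2:ℂ))) ^ (r + 1)) := by
          congr 1
          refine tsum_congr fun q => ?_
          rw [if_pos ⟨dvd_mul_right _ _, dvd_mul_right _ _⟩]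
          have hLq : S + (((((D:ℤ) * q.1 : ℤ)):ℂ) * τ + ((((D:ℤ) * q.2 : ℤ)):ℂ))
              = (D:ℂ) * (s₀ + ((q.1:ℂ) * τ + (q.2:ℂ))) := by
            rw [hS]; push_cast; ring
          rw [hLq, map_mul, Complex.conj_natCast, mul_pow, mul_pow, mul_div_mul_comm]
          ring
      _ = (D:ℂ) ^ ((k:ℤ) - (r:ℤ) + 1) * eisKron τ k r s₀ 0 := by
          rw [tsum_mul_left, EKaux.eisKron_zero_eq τ k r s₀ hnv1, ← hCdef, hzpow]
          ring
  have h00 : ((0,0) : ℕ × ℕ) ∈ Finset.range D ×ˢ Finset.range D :=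
    Finset.mem_product.mpr ⟨Finset.mem_range.mpr hDpos, Finset.mem_range.mpr hDpos⟩
  rw [Finset.sum_erase_eq_sub h00]
  have h00val : eisKron τ k r S
      (((N:ℂ) * ((((0,0) : ℕ × ℕ)).1:ℂ) / D) * τ + (N:ℂ) * ((((0,0) : ℕ × ℕ)).2:ℂ) / D)
      = eisKron τ k r S 0 := by
    norm_num
  rw [h00val, key]
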